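/- Let d ≥ 2 be an even integer and fix t ∈ (0, 1/4). Then there exist an integer m and unit vectors w₁*, …, w_m* ∈ ℝ^d such that t ≤ θ(w_i*, w_j*) ≤ 6.5·t for all i ≠ j, and m ≥ 2^{d/16}. -/

import Mathlib

open InnerProductGeometry
open Finset Real

set_option maxHeartbeats 1000000

def dH {k : ℕ} (x y : Fin k → Bool) : ℕ := (univ.filter fun j => x j ≠ y j).card

lemma dH_comm {k} (x y : Fin k → Bool) : dH x y = dH y x := by
  unfold dH; congr 1; ext j; simp [ne_comm]

lemma sphere_card (k i : ℕ) (c : Fin k → Bool) :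
    (univ.filter fun x : Fin k → Bool => dH x c = i).card = k.choose i := by
  have hkc : k.choose i = (Finset.powersetCard i (univ : Finset (Fin k))).card := by
    simp [Finset.card_powersetCard]
  rw [hkc]
  apply Finset.card_bij' (fun x _ => univ.filter fun j => x j ≠ c j)
    (fun s _ => fun j => if j ∈ s then !(c j) else c j)
  · intro x hx
    simp only [mem_filter, mem_univ, true_and] at hx ⊢
    simp [Finset.mem_powersetCard]
    exact hx
  · intro s hs
    simp only [Finset.mem_powersetCard] at hs
    simp only [mem_filter, mem_univ, true_and]
    rw [← hs.2]; unfold dH; congr 1; ext j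
    by_cases hj : j ∈ s <;> simp [hj]
  · intro x hx
    funext j
    simp only [mem_filter, mem_univ, true_and]
    cases hc : c j <;> cases hxj : x j <;> simp [hc, hxj]
  · intro s hs
    ext j
    simp only [mem_filter, mem_univ, true_and]
    by_cases hj : j ∈ s <;> simp [hj]

lemma dH_le {k} (x y : Fin k → Bool) : dH x y ≤ k := by
  unfold dH
  exact le_trans (Finset.card_filter_le univ _) (by simp)

lemma count_pred (k : ℕ) (c : Fin k → Bool) (p : ℕ → Prop) [DecidablePred p]
    (hsc : ∀ i, (univ.filter fun x : Fin k → Bool => dH x c = i).card = k.choose i) :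
    (univ.filter fun x : Fin k → Bool => p (dH x c)).card
      = ∑ i ∈ (range (k+1)).filter p, k.choose i := by
  rw [Finset.card_eq_sum_card_fiberwise
    (f := fun x : Fin k → Bool => dH x c) (t := (range (k+1)).filter p)
    (fun x hx => by
      simp only [Finset.mem_coe, mem_filter, mem_univ, true_and, mem_range] at hx ⊢
      exact ⟨Nat.lt_succ_of_le (dH_le x c), hx⟩)]
  apply Finset.sum_congr rfl
  intro i hi
  simp only [mem_filter, mem_range] at hi
  rw [← hsc i]
  congr 1
  ext x
  simp only [mem_filter, mem_univ, true_and, and_iff_right_iff_imp]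
  intro h; rw [h]; exact hi.2

lemma weighted_bound (k : ℕ) :
    (∑ i ∈ (range (k+1)).filter (fun i => 4*i < k ∨ 3*k < 4*i), k.choose i)
      * 3 ^ ((3*k+3)/4) ≤ 2 * 4 ^ k := by
  set c := (3*k+3)/4 with hc
  have h1 : (4:ℕ)^k = ∑ i ∈ range (k+1), 1^i * 3^(k-i) * k.choose i := by
    have := Commute.add_pow (Commute.all (1:ℕ) 3) k
    norm_num at this ⊢
    omega
  have h2 : (4:ℕ)^k = ∑ i ∈ range (k+1), 3^i * 1^(k-i) * k.choose i := by
    have := Commute.add_pow (Commute.all (3:ℕ) 1) k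
    norm_num at this ⊢
    omega
  rw [Finset.sum_mul]
  calc ∑ i ∈ (range (k+1)).filter (fun i => 4*i < k ∨ 3*k < 4*i), k.choose i * 3^c
      ≤ ∑ i ∈ (range (k+1)).filter (fun i => 4*i < k ∨ 3*k < 4*i),
          (1^i * 3^(k-i) * k.choose i + 3^i * 1^(k-i) * k.choose i) := by
        apply Finset.sum_le_sum
        intro i hi
        simp only [mem_filter, mem_range, one_pow, one_mul, mul_one] at hi ⊢
        rcases hi.2 with h | h
        · have hle : c ≤ k - i := by omega
          calc k.choose i * 3^c ≤ 3^(k-i) * k.choose i := by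
                rw [mul_comm]
                exact Nat.mul_le_mul (Nat.pow_le_pow_right (by norm_num) hle) le_rfl
          _ ≤ _ := Nat.le_add_right _ _
        · have hle : c ≤ i := by omega
          calc k.choose i * 3^c ≤ 3^i * k.choose i := by
                rw [mul_comm]
                exact Nat.mul_le_mul (Nat.pow_le_pow_right (by norm_num) hle) le_rfl
          _ ≤ _ := Nat.le_add_left _ _
    _ ≤ ∑ i ∈ range (k+1), (1^i * 3^(k-i) * k.choose i + 3^i * 1^(k-i) * k.choose i) :=
        Finset.sum_le_sum_of_subset (Finset.filter_subset _ _)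
    _ = 2 * 4^k := by rw [Finset.sum_add_distrib, ← h1, ← h2]; ring

lemma exists_code (k : ℕ) (hk : 0 < k)
    (B : ℕ)
    (hB : ∀ c : Fin k → Bool,
      (univ.filter fun x : Fin k → Bool => 4 * dH x c < k ∨ 3*k < 4 * dH x c).card = B) :
    ∃ C : Finset (Fin k → Bool),
      (∀ x ∈ C, ∀ y ∈ C, x ≠ y → k ≤ 4 * dH x y ∧ 4 * dH x y ≤ 3 * k) ∧
      2 ^ k ≤ C.card * B := by
  classical
  set good : Finset (Fin k → Bool) → Prop :=
    fun C => ∀ x ∈ C, ∀ y ∈ C, x ≠ y → k ≤ 4 * dH x y ∧ 4 * dH x y ≤ 3 * k with hgood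
  obtain ⟨C, hCmem, hCmax⟩ := Finset.exists_max_image
      ((univ : Finset (Finset (Fin k → Bool))).filter good) Finset.card
      ⟨∅, by simp [hgood]⟩
  simp only [mem_filter, mem_univ, true_and] at hCmem
  refine ⟨C, hCmem, ?_⟩
  have hcover : ∀ x : Fin k → Bool, ∃ c ∈ C, 4 * dH x c < k ∨ 3*k < 4 * dH x c := by
    intro x
    by_cases hx : x ∈ C
    · refine ⟨x, hx, Or.inl ?_⟩
      have : dH x x = 0 := by simp [dH]
      omega
    · by_contra hno
      push_neg at hno
      have hgood' : good (insert x C) := by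
        intro a ha b hb hab
        rcases Finset.mem_insert.1 ha with rfl | ha'
        · rcases Finset.mem_insert.1 hb with rfl | hb'
          · exact absurd rfl hab
          · obtain ⟨h1, h2⟩ := hno b hb'
            omega
        · rcases Finset.mem_insert.1 hb with rfl | hb'
          · obtain ⟨h1, h2⟩ := hno a ha'
            have : dH a b = dH b a := by unfold dH; congr 1; ext j; simp [ne_comm]
            omega
          · exact hCmem a ha' b hb' hab
      have hle := hCmax (insert x C) (Finset.mem_filter.2 ⟨Finset.mem_univ _, hgood'⟩)
      rw [Finset.card_insert_of_notMem hx] at hle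
      omega
  have hcard : (2:ℕ) ^ k ≤ ∑ c ∈ C,
      (univ.filter fun x : Fin k → Bool => 4 * dH x c < k ∨ 3*k < 4 * dH x c).card := by
    have hsub : (univ : Finset (Fin k → Bool)) ⊆
        C.biUnion (fun c => univ.filter fun x => 4 * dH x c < k ∨ 3*k < 4 * dH x c) := by
      intro x _
      obtain ⟨c, hc, h⟩ := hcover x
      exact Finset.mem_biUnion.2 ⟨c, hc, Finset.mem_filter.2 ⟨Finset.mem_univ _, h⟩⟩
    calc (2:ℕ)^k = (univ : Finset (Fin k → Bool)).card := by simp [Finset.card_univ]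
    _ ≤ _ := le_trans (Finset.card_le_card hsub) (Finset.card_biUnion_le)
  calc (2:ℕ)^k ≤ ∑ c ∈ C, (univ.filter fun x : Fin k → Bool =>
        4 * dH x c < k ∨ 3*k < 4 * dH x c).card := hcard
  _ = C.card * B := by rw [Finset.sum_congr rfl (fun c _ => hB c), Finset.sum_const, smul_eq_mul]

noncomputable def vv (k : ℕ) (t : ℝ) (c : Fin k → Bool) : EuclideanSpace ℝ (Fin (k+1)) :=
  WithLp.toLp 2 (Fin.cons (Real.sqrt (1 - (2*Real.sin (t/2))^2))
    (fun j => (2*Real.sin (t/2) / Real.sqrt k) * (if c j then 1 else -1)))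

lemma s_facts (t : ℝ) (ht : 0 < t) (ht' : t < 1/4) :
    0 < 2*Real.sin (t/2) ∧ 2*Real.sin (t/2) ≤ t ∧ Real.cos t = 1 - (2*Real.sin (t/2))^2/2 := by
  have hpi := Real.pi_gt_three
  have h1 : 0 < Real.sin (t/2) :=
    Real.sin_pos_of_pos_of_lt_pi (by linarith) (by linarith)
  have h2 : Real.sin (t/2) ≤ t/2 := Real.sin_le (by linarith)
  have h3 := Real.cos_two_mul (t/2)
  have h4 := Real.sin_sq_add_cos_sq (t/2)
  have h5 : 2 * (t/2) = t := by ring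
  rw [h5] at h3
  refine ⟨by linarith, by linarith, by nlinarith⟩

lemma vv_norm (k : ℕ) (hk : 0 < k) (t : ℝ) (ht : 0 < t) (ht' : t < 1/4) (c : Fin k → Bool) :
    ‖vv k t c‖ = 1 := by
  obtain ⟨hs0, hs1, _⟩ := s_facts t ht ht'
  set s := 2*Real.sin (t/2) with hs
  have hs2 : s^2 ≤ 1 := by nlinarith
  have hk0 : (0:ℝ) < k := by exact_mod_cast hk
  rw [EuclideanSpace.norm_eq]
  have hsum : ∑ i, ‖vv k t c i‖^2 = 1 := by
    rw [Fin.sum_univ_succ]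
    have h0 : vv k t c 0 = Real.sqrt (1 - s^2) := by rw [vv, WithLp.ofLp_toLp]; exact Fin.cons_zero _ _
    have hj : ∀ j : Fin k, ‖vv k t c j.succ‖^2 = s^2/k := by
      intro j
      have : vv k t c j.succ = (s / Real.sqrt k) * (if c j then 1 else -1) :=
        by rw [vv, WithLp.ofLp_toLp]; exact Fin.cons_succ _ _ _
      rw [this, Real.norm_eq_abs, sq_abs]
      rcases Bool.dichotomy (c j) with h | h <;> rw [h] <;>
        simp [mul_pow, div_pow, Real.sq_sqrt hk0.le]
    rw [h0, Real.norm_eq_abs, sq_abs, Real.sq_sqrt (by linarith)]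
    rw [Finset.sum_congr rfl (fun j _ => hj j), Finset.sum_const, Finset.card_univ,
      Fintype.card_fin, nsmul_eq_mul]
    field_simp
    ring
  rw [hsum, Real.sqrt_one]

lemma vv_inner (k : ℕ) (hk : 0 < k) (t : ℝ) (ht : 0 < t) (ht' : t < 1/4)
    (x y : Fin k → Bool) :
    inner ℝ (vv k t x) (vv k t y) =
      (1 : ℝ) - (2*Real.sin (t/2))^2 * (2 * (dH x y) / k) := by
  obtain ⟨hs0, hs1, _⟩ := s_facts t ht ht'
  set s := 2*Real.sin (t/2) with hs
  have hs2 : s^2 ≤ 1 := by nlinarith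
  have hk0 : (0:ℝ) < k := by exact_mod_cast hk
  rw [PiLp.inner_apply]
  simp only [RCLike.inner_apply, conj_trivial]
  rw [Fin.sum_univ_succ]
  have h0 : vv k t x 0 * vv k t y 0 = 1 - s^2 := by
    have hx : vv k t x 0 = Real.sqrt (1 - s^2) := by rw [vv, WithLp.ofLp_toLp]; exact Fin.cons_zero _ _
    have hy : vv k t y 0 = Real.sqrt (1 - s^2) := by rw [vv, WithLp.ofLp_toLp]; exact Fin.cons_zero _ _
    rw [hx, hy, Real.mul_self_sqrt (by linarith : (0:ℝ) ≤ 1 - s^2)]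
  have hterm : ∀ j : Fin k, vv k t x j.succ * vv k t y j.succ
      = (s^2/k) * (1 - 2 * (if x j ≠ y j then (1:ℝ) else 0)) := by
    intro j
    have hx : vv k t x j.succ = (s / Real.sqrt k) * (if x j then 1 else -1) :=
      by rw [vv, WithLp.ofLp_toLp]; exact Fin.cons_succ _ _ _
    have hy : vv k t y j.succ = (s / Real.sqrt k) * (if y j then 1 else -1) :=
      by rw [vv, WithLp.ofLp_toLp]; exact Fin.cons_succ _ _ _
    rw [hx, hy]
    have hss : (s / Real.sqrt k) * (s / Real.sqrt k) = s^2/k := by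
      rw [div_mul_div_comm, Real.mul_self_sqrt hk0.le, sq]
    have hAB : (if x j then (1:ℝ) else -1) * (if y j then 1 else -1)
        = 1 - 2 * (if x j ≠ y j then (1:ℝ) else 0) := by
      rcases Bool.dichotomy (x j) with h1 | h1 <;> rcases Bool.dichotomy (y j) with h2 | h2 <;>
        simp [h1, h2] <;> norm_num
    calc (s / Real.sqrt k * (if x j then (1:ℝ) else -1)) *
          (s / Real.sqrt k * (if y j then (1:ℝ) else -1))
        = (s / Real.sqrt k * (s / Real.sqrt k)) *
          ((if x j then (1:ℝ) else -1) * (if y j then (1:ℝ) else -1)) := by ring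
      _ = (s^2/k) * (1 - 2 * (if x j ≠ y j then (1:ℝ) else 0)) := by rw [hss, hAB]
  rw [Finset.sum_congr rfl (fun j _ => (mul_comm _ _).trans (hterm j))]
  have hsum : ∑ _j : Fin k, s^2/(k:ℝ) = s^2 := by
    rw [Finset.sum_const, Finset.card_univ, Fintype.card_fin, nsmul_eq_mul]
    field_simp
  have hsum2 : ∑ j : Fin k, (if x j ≠ y j then (1:ℝ) else 0) = dH x y := by
    rw [Finset.sum_boole]
    rfl
  have expand : ∀ j : Fin k, s^2/(k:ℝ) * (1 - 2 * (if x j ≠ y j then (1:ℝ) else 0))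
      = s^2/(k:ℝ) - (2*s^2/(k:ℝ)) * (if x j ≠ y j then (1:ℝ) else 0) := by
    intro j; ring
  rw [Finset.sum_congr rfl (fun j _ => expand j), Finset.sum_sub_distrib, hsum,
    ← Finset.mul_sum, hsum2, (mul_comm _ _).trans h0]
  ring

lemma arccos_anti {a b : ℝ} (h : a ≤ b) : Real.arccos b ≤ Real.arccos a := by
  unfold Real.arccos
  have := Real.monotone_arcsin h
  linarith

lemma angle_bounds (t I : ℝ) (ht : 0 < t) (ht' : t < 1/4)
    (hlow : I ≤ Real.cos t) (hup : Real.cos (6.5*t) ≤ I) :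
    t ≤ Real.arccos I ∧ Real.arccos I ≤ 6.5 * t := by
  have hpi := Real.pi_gt_three
  constructor
  · have := arccos_anti hlow
    rwa [Real.arccos_cos ht.le (by linarith)] at this
  · have := arccos_anti hup
    rwa [Real.arccos_cos (by linarith) (by linarith)] at this

lemma inner_bounds (t : ℝ) (ht : 0 < t) (ht' : t < 1/4) (D k : ℕ) (hk : 0 < k)
    (h1 : k ≤ 4*D) (h2 : 4*D ≤ 3*k) :
    (1 : ℝ) - (2*Real.sin (t/2))^2 * (2 * (D:ℝ) / k) ≤ Real.cos t ∧
    Real.cos (6.5*t) ≤ (1 : ℝ) - (2*Real.sin (t/2))^2 * (2 * (D:ℝ) / k) := by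
  have hpi := Real.pi_gt_three
  have h1' : (k:ℝ) ≤ 4*D := by exact_mod_cast h1
  have h2' : (4:ℝ)*D ≤ 3*k := by exact_mod_cast h2
  have hk0 : (0:ℝ) < k := by exact_mod_cast hk
  have hsin : 0 < Real.sin (t/2) :=
    Real.sin_pos_of_pos_of_lt_pi (by linarith) (by linarith)
  have hsle : Real.sin (t/2) ≤ t/2 := Real.sin_le (by linarith)
  have hcos : Real.cos t = 1 - (2*Real.sin (t/2))^2/2 := by
    have h3 := Real.cos_two_mul (t/2)
    have h4 := Real.sin_sq_add_cos_sq (t/2)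
    have h5 : 2 * (t/2) = t := by ring
    rw [h5] at h3
    nlinarith
  set s := 2*Real.sin (t/2) with hs
  have hs0 : 0 < s := by positivity
  have hst : s ≤ t := by simp only [hs]; linarith
  have hq : (1:ℝ)/4 ≤ (D:ℝ)/k := by rw [le_div_iff₀ hk0]; linarith
  have hq2 : (D:ℝ)/k ≤ 3/4 := by rw [div_le_iff₀ hk0]; linarith
  have hrw : s^2 * (2 * (D:ℝ) / k) = 2*s^2 * ((D:ℝ)/k) := by ring
  constructor
  · rw [hcos, hrw]
    nlinarith [mul_nonneg (sq_nonneg s) (sub_nonneg.2 hq)]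
  · -- cos (6.5 t) ≤ 1 - 2 s^2 (D/k)
    have key : 3 * (1 - Real.cos t) ≤ 1 - Real.cos (6.5*t) := by
      have h1ct : 1 - Real.cos t ≤ t^2/2 := by rw [hcos]; nlinarith
      set y := 3.25*t with hy
      have hy0 : 0 < y := by rw [hy]; linarith
      have hy1 : y ≤ 13/16 := by rw [hy]; linarith
      have hc65 : Real.cos (6.5*t) = 1 - 2 * Real.sin y^2 := by
        have h3 := Real.cos_two_mul y
        have h4 := Real.sin_sq_add_cos_sq y
        have h5 : 2 * y = 6.5*t := by rw [hy]; ring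
        rw [h5] at h3
        nlinarith
      have hsl : y - y^3/4 < Real.sin y :=
        by have := Real.sin_gt_sub_cube hy0; nlinarith [pow_pos hy0 3]
      have hy2 : y^2 ≤ 169/256 := by nlinarith
      have hL1 : y*(855/1024) ≤ y - y^3/4 := by nlinarith
      have hL0 : 0 ≤ y*(855/1024) := by positivity
      have hsin2 : (y*(855/1024))^2 ≤ Real.sin y^2 := by nlinarith
      rw [hc65]
      have hyt : y^2 = (169/16)*t^2 := by rw [hy]; ring
      nlinarith
    have hfrac : 2*s^2 * ((D:ℝ)/k) ≤ (3/2) * s^2 := by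
      nlinarith [mul_nonneg (sq_nonneg s) (sub_nonneg.2 hq2)]
    have heq : (3/2) * s^2 = 3 * (1 - Real.cos t) := by rw [hcos]; ring
    rw [hrw]
    linarith

lemma rpow_bound (k m : ℕ) (hk : 9 ≤ k)
    (h : 2^k * 3^((3*k+3)/4) ≤ m * (2 * 4^k)) :
    (2:ℝ) ^ (((k:ℝ)+1)/16) ≤ (m:ℝ) := by
  set c := (3*k+3)/4 with hc
  have hnat : (2:ℕ)^(17*k+17) ≤ 3^(16*c) := by
    have e1 : (2:ℕ)^(17*k+17) = 131072 * 131072^k := by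
      rw [pow_add, pow_mul]; norm_num; ring
    have e2 : (3:ℕ)^(12*k) = 531441^k := by rw [pow_mul]; norm_num
    have e3 : (131072:ℕ) * 131072^k ≤ 531441^k := by
      calc (131072:ℕ) * 131072^k ≤ 4^k * 131072^k := by
            have h9 : (131072:ℕ) ≤ 4^k :=
              le_trans (by norm_num) (Nat.pow_le_pow_right (by norm_num) hk)
            exact Nat.mul_le_mul_right _ h9
      _ = 524288^k := by rw [← mul_pow]; norm_num
      _ ≤ 531441^k := Nat.pow_le_pow_left (by norm_num) k
    calc (2:ℕ)^(17*k+17) = 131072 * 131072^k := e1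
    _ ≤ 531441^k := e3
    _ = 3^(12*k) := e2.symm
    _ ≤ 3^(16*c) := Nat.pow_le_pow_right (by norm_num) (by omega)
  have key : (2:ℝ)^(17*k+17) ≤ (3:ℝ)^(16*c) := by exact_mod_cast hnat
  set a := (2:ℝ) ^ (((k:ℝ)+1)/16) with ha
  have ha0 : 0 ≤ a := Real.rpow_nonneg (by norm_num) _
  have ea : a^(16:ℕ) = (2:ℝ)^(k+1) := by
    rw [ha, ← Real.rpow_natCast ((2:ℝ) ^ (((k:ℝ)+1)/16)) 16,
      ← Real.rpow_mul (by norm_num)]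
    rw [show (((k:ℝ)+1)/16 * (16:ℕ) : ℝ) = (k:ℝ)+1 by push_cast; ring]
    rw [show ((k:ℝ)+1) = ((k+1 : ℕ):ℝ) by push_cast; ring, Real.rpow_natCast]
  have hA : a * (2*(4:ℝ)^k) ≤ (2:ℝ)^k*(3:ℝ)^c := by
    have h16 : (a * (2*(4:ℝ)^k))^(16:ℕ) ≤ ((2:ℝ)^k*(3:ℝ)^c)^(16:ℕ) := by
      have l1 : (a * (2*(4:ℝ)^k))^(16:ℕ) = a^(16:ℕ) * 2^(16:ℕ) * ((4:ℝ)^k)^(16:ℕ) := by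
        ring
      have l2 : ((4:ℝ)^k)^(16:ℕ) = (2:ℝ)^(32*k) := by
        rw [← pow_mul, show (4:ℝ) = 2^2 by norm_num, ← pow_mul]
        ring_nf
      have l3 : ((2:ℝ)^k*(3:ℝ)^c)^(16:ℕ) = (2:ℝ)^(16*k) * (3:ℝ)^(16*c) := by
        rw [mul_pow, ← pow_mul, ← pow_mul]
        ring_nf
      rw [l1, l2, l3, ea]
      have l4 : (2:ℝ)^(k+1) * 2^(16:ℕ) * (2:ℝ)^(32*k)
          = (2:ℝ)^(16*k) * (2:ℝ)^(17*k+17) := by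
        rw [← pow_add, ← pow_add, ← pow_add]
        ring_nf
      rw [l4]
      exact mul_le_mul_of_nonneg_left key (by positivity)
    exact le_of_pow_le_pow_left₀ (by norm_num) (by positivity) h16
  have hcast : (2:ℝ)^k * (3:ℝ)^c ≤ (m:ℝ) * (2*(4:ℝ)^k) := by exact_mod_cast h
  have h2 : a * (2*(4:ℝ)^k) ≤ (m:ℝ) * (2*(4:ℝ)^k) := le_trans hA hcast
  have hpos : (0:ℝ) < 2*(4:ℝ)^k := by positivity
  exact le_of_mul_le_mul_right h2 hpos

lemma arccos_anti' {a b : ℝ} (h : a ≤ b) : Real.arccos b ≤ Real.arccos a := by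
  unfold Real.arccos
  have := Real.monotone_arcsin h
  linarith

lemma planar (d : ℕ) (hd : 2 ≤ d) (t : ℝ) (ht : 0 < t) (ht' : t < 1/4) :
    ∃ w : Fin 7 → EuclideanSpace ℝ (Fin d),
      (∀ i, ‖w i‖ = 1) ∧ ∀ i j, i ≠ j →
        t ≤ InnerProductGeometry.angle (w i) (w j) ∧
        InnerProductGeometry.angle (w i) (w j) ≤ 6.5 * t := by
  have hpi := Real.pi_gt_three
  set E0 : EuclideanSpace ℝ (Fin d) := EuclideanSpace.single (⟨0, by omega⟩ : Fin d) (1:ℝ)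
  set E1 : EuclideanSpace ℝ (Fin d) := EuclideanSpace.single (⟨1, by omega⟩ : Fin d) (1:ℝ)
  have h00 : (inner ℝ E0 E0 : ℝ) = 1 := by
    simp [E0, EuclideanSpace.inner_single_left, EuclideanSpace.single_apply]
  have h11 : (inner ℝ E1 E1 : ℝ) = 1 := by
    simp [E1, EuclideanSpace.inner_single_left, EuclideanSpace.single_apply]
  have h01 : (inner ℝ E0 E1 : ℝ) = 0 := by
    simp [E0, E1, EuclideanSpace.inner_single_left, EuclideanSpace.single_apply]
  have h10 : (inner ℝ E1 E0 : ℝ) = 0 := by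
    simp [E0, E1, EuclideanSpace.inner_single_left, EuclideanSpace.single_apply]
  set w : Fin 7 → EuclideanSpace ℝ (Fin d) :=
    fun i => Real.cos (i.val * t) • E0 + Real.sin (i.val * t) • E1 with hw
  have hinner : ∀ i j : Fin 7, (inner ℝ (w i) (w j) : ℝ) = Real.cos ((i.val : ℝ) * t - j.val * t) := by
    intro i j
    rw [hw]
    simp only [inner_add_left, inner_add_right, real_inner_smul_left, real_inner_smul_right,
      h00, h01, h10, h11]
    rw [Real.cos_sub]
    ring
  have hnorm : ∀ i : Fin 7, ‖w i‖ = 1 := by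
    intro i
    have h1 : (inner ℝ (w i) (w i) : ℝ) = 1 := by
      rw [hinner i i, sub_self, Real.cos_zero]
    have h2 := real_inner_self_eq_norm_mul_norm (w i)
    nlinarith [norm_nonneg (w i)]
  refine ⟨w, hnorm, ?_⟩
  intro i j hij
  have hvals : i.val ≠ j.val := fun h => hij (Fin.ext h)
  have hi6 : (i.val : ℝ) ≤ 6 := by exact_mod_cast Nat.le_of_lt_succ i.isLt
  have hj6 : (j.val : ℝ) ≤ 6 := by exact_mod_cast Nat.le_of_lt_succ j.isLt
  have hi0 : (0:ℝ) ≤ i.val := Nat.cast_nonneg _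
  have hj0 : (0:ℝ) ≤ j.val := Nat.cast_nonneg _
  set u : ℝ := |(i.val : ℝ) - j.val| with hu
  have hu1 : 1 ≤ u := by
    rcases Nat.lt_or_ge i.val j.val with h | h
    · have : (i.val:ℝ) + 1 ≤ j.val := by exact_mod_cast h
      rw [hu, abs_of_nonpos (by linarith)]; linarith
    · have h' : i.val ≠ j.val := hvals
      have : (j.val:ℝ) + 1 ≤ i.val := by
        have : j.val < i.val := lt_of_le_of_ne h (Ne.symm h')
        exact_mod_cast this
      rw [hu, abs_of_nonneg (by linarith)]; linarith
  have hu6 : u ≤ 6 := abs_le.2 ⟨by linarith, by linarith⟩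
  have hangle : InnerProductGeometry.angle (w i) (w j) = u * t := by
    have : InnerProductGeometry.angle (w i) (w j)
        = Real.arccos ((inner ℝ (w i) (w j) : ℝ) / (‖w i‖ * ‖w j‖)) := rfl
    rw [this, hnorm i, hnorm j, mul_one, div_one, hinner i j]
    have habs : (i.val : ℝ) * t - j.val * t = ((i.val:ℝ) - j.val) * t := by ring
    rw [habs, ← Real.cos_abs, abs_mul, abs_of_pos ht, ← hu]
    exact Real.arccos_cos (by positivity) (by nlinarith)
  rw [hangle]
  constructor
  · nlinarith
  · nlinarith

/-- For every even `d ≥ 2` and `t ∈ (0, 1/4)` there exist `m ≥ 2^{d/16}` unit vectors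
`w₁*, …, w_m* ∈ ℝ^d` whose pairwise angles all lie in `[t, 6.5·t]`. -/
theorem stmt_3 (d : ℕ) (hd : 2 ≤ d) (hde : Even d) (t : ℝ) (ht : 0 < t) (ht' : t < 1 / 4) :
    ∃ (m : ℕ) (w : Fin m → EuclideanSpace ℝ (Fin d)),
      (∀ i, ‖w i‖ = 1) ∧
      (∀ i j, i ≠ j →
        t ≤ InnerProductGeometry.angle (w i) (w j) ∧
        InnerProductGeometry.angle (w i) (w j) ≤ 6.5 * t) ∧
      ((2 : ℝ) ^ ((d : ℝ) / 16) ≤ (m : ℝ)) := by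
  by_cases hd44 : d ≤ 44
  · obtain ⟨w, hn, ha⟩ := planar d hd t ht ht'
    refine ⟨7, w, hn, ha, ?_⟩
    have h1 : (2:ℝ) ^ ((d:ℝ)/16) ≤ (2:ℝ) ^ ((44:ℝ)/16) := by
      apply Real.rpow_le_rpow_of_exponent_le (by norm_num)
      have : (d:ℝ) ≤ 44 := by exact_mod_cast hd44
      linarith
    have h2 : (2:ℝ) ^ ((44:ℝ)/16) ≤ 7 := by
      have hq : ((2:ℝ) ^ ((44:ℝ)/16))^(4:ℕ) ≤ (7:ℝ)^(4:ℕ) := by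
        have heq : ((2:ℝ) ^ ((44:ℝ)/16))^(4:ℕ) = (2:ℝ)^(11:ℕ) := by
          rw [← Real.rpow_natCast ((2:ℝ)^((44:ℝ)/16)) 4, ← Real.rpow_mul (by norm_num)]
          rw [show ((44:ℝ)/16*((4:ℕ):ℝ):ℝ) = (((11:ℕ):ℝ)) by push_cast; ring,
            Real.rpow_natCast]
        rw [heq]; norm_num
      exact le_of_pow_le_pow_left₀ (by norm_num) (by norm_num) hq
    push_cast
    linarith
  · push_neg at hd44
    obtain ⟨k, rfl⟩ : ∃ k, d = k + 1 := ⟨d - 1, by omega⟩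
    have hk0 : 0 < k := by omega
    have hk9 : 9 ≤ k := by omega
    set B := ∑ i ∈ (range (k+1)).filter (fun i => 4*i < k ∨ 3*k < 4*i), k.choose i with hBdef
    have hB : ∀ c : Fin k → Bool,
        (univ.filter fun x : Fin k → Bool => 4*dH x c < k ∨ 3*k < 4*dH x c).card = B :=
      fun c => count_pred k c (fun i => 4*i < k ∨ 3*k < 4*i) (fun i => sphere_card k i c)
    obtain ⟨C, hCgood, hCcard⟩ := exists_code k hk0 B hB
    have hwb := weighted_bound k
    have hfinal : 2^k * 3^((3*k+3)/4) ≤ C.card * (2 * 4^k) := by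
      calc 2^k * 3^((3*k+3)/4) ≤ (C.card * B) * 3^((3*k+3)/4) :=
            Nat.mul_le_mul_right _ hCcard
      _ = C.card * (B * 3^((3*k+3)/4)) := by ring
      _ ≤ C.card * (2*4^k) := Nat.mul_le_mul_left _ hwb
    have hm := rpow_bound k C.card hk9 hfinal
    set e := C.equivFin with he
    refine ⟨C.card, fun i => vv k t ((e.symm i : ↥C) : Fin k → Bool), ?_, ?_, ?_⟩
    · intro i
      exact vv_norm k hk0 t ht ht' _
    · intro i j hij
      set x := ((e.symm i : ↥C) : Fin k → Bool) with hx
      set y := ((e.symm j : ↥C) : Fin k → Bool) with hy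
      have hxy : x ≠ y := by
        intro hcontra
        apply hij
        have : (e.symm i : ↥C) = (e.symm j : ↥C) := Subtype.ext hcontra
        exact e.symm.injective this
      have hD := hCgood x (e.symm i).2 y (e.symm j).2 hxy
      have hang : InnerProductGeometry.angle (vv k t x) (vv k t y)
          = Real.arccos ((1:ℝ) - (2*Real.sin (t/2))^2 * (2 * (dH x y : ℝ) / k)) := by
        have hdef : InnerProductGeometry.angle (vv k t x) (vv k t y)
            = Real.arccos ((inner ℝ (vv k t x) (vv k t y) : ℝ)
                / (‖vv k t x‖ * ‖vv k t y‖)) := rfl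
        rw [hdef, vv_norm k hk0 t ht ht', vv_norm k hk0 t ht ht', mul_one, div_one,
          vv_inner k hk0 t ht ht']
      obtain ⟨hlow, hup⟩ := inner_bounds t ht ht' (dH x y) k hk0 hD.1 hD.2
      rw [hang]
      exact angle_bounds t _ ht ht' hlow hup
    · have hcast : (((k+1:ℕ)):ℝ) = (k:ℝ)+1 := by push_cast; ring
      rw [hcast]
      exact hm
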